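/- Let G be a finite connected d-regular non-bipartite graph with no self-loops added (d⁺ = d), and let 2φ(G)+1 be its odd girth (the length of the shortest odd cycle of G), with φ(G) ≥ 2. Then there exist an initial load distribution, cyclic orderings of the outgoing edges at each node, and initial rotor positions, such that in the resulting execution of the Rotor-Router algorithm the discrepancy at every time step is at least d·(φ(G) − 1); in particular the Rotor-Router cannot achieve discrepancy better than c·d·φ(G) for some universal constant c > 0. -/

import Mathlib

open Finset

/-- A `d`-regular connected symmetric graph `G` together with `dSelf` self-loops
attached to every node (the balancing graph `G⁺`). -/
structure LBSetup (V : Type) [Fintype V] [DecidableEq V] where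
  d : ℕ
  dSelf : ℕ
  Adj : V → V → Bool
  symm : ∀ u v : V, Adj u v → Adj v u
  loopless : ∀ u : V, ¬ Adj u u
  regular : ∀ u : V, (Finset.univ.filter fun v => Adj u v).card = d
  connected : ∀ u v : V, Relation.ReflTransGen (fun a b => Adj a b = true) u v

variable {V : Type} [Fintype V] [DecidableEq V]

/-- Degree `d⁺ = d + d°` of the balancing graph. -/
def LBSetup.dPlus (S : LBSetup V) : ℕ := S.d + S.dSelf

/-- Neighbours of `u` in the original graph. -/
def LBSetup.nbrs (S : LBSetup V) (u : V) : Finset V :=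
  Finset.univ.filter fun v => S.Adj u v

/-- A load-balancing algorithm on the balancing graph `G⁺`: integer flows on
original edges (`f`) and on self-loops (`g`), and load vectors `x`, satisfying
the conservation laws. Time steps start at `t = 1`. -/
structure LBAlgo (S : LBSetup V) where
  f : ℕ → V → V → ℕ
  g : ℕ → V → Fin S.dSelf → ℕ
  x : ℕ → V → ℕ
  flow_out : ∀ t, 1 ≤ t → ∀ u : V,
    x t u = (∑ v ∈ S.nbrs u, f t u v) + ∑ i : Fin S.dSelf, g t u i
  flow_in : ∀ t, 1 ≤ t → ∀ u : V,
    x (t + 1) u = (∑ v ∈ S.nbrs u, f t v u) + ∑ i : Fin S.dSelf, g t u i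

/-- Cumulative flow on the original edge `(u, v)` up to time `t`. -/
def LBAlgo.F {S : LBSetup V} (A : LBAlgo S) (t : ℕ) (u v : V) : ℕ :=
  ∑ τ ∈ Finset.Icc 1 t, A.f τ u v

/-- Cumulative flow on the `i`-th self-loop of `u` up to time `t`. -/
def LBAlgo.Gcum {S : LBSetup V} (A : LBAlgo S) (t : ℕ) (u : V) (i : Fin S.dSelf) : ℕ :=
  ∑ τ ∈ Finset.Icc 1 t, A.g τ u i

/-- Cumulative δ-fairness: every edge (original or self-loop) of `u` carries at least
`⌊x_t(u)/d⁺⌋` tokens in every step, and cumulative flows on any two original edges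
of `u` differ by at most `δ`. -/
def CumFair (S : LBSetup V) (A : LBAlgo S) (δ : ℝ) : Prop :=
  (∀ t, 1 ≤ t → ∀ u : V,
      (∀ v : V, S.Adj u v → A.x t u / S.dPlus ≤ A.f t u v) ∧
      (∀ i : Fin S.dSelf, A.x t u / S.dPlus ≤ A.g t u i)) ∧
  (∀ t : ℕ, ∀ u v w : V, S.Adj u v → S.Adj u w →
      |(A.F t u v : ℝ) - (A.F t u w : ℝ)| ≤ δ)

/-- Maximum load at time `t`. -/
def maxLoad {S : LBSetup V} [Nonempty V] (A : LBAlgo S) (t : ℕ) : ℕ :=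
  Finset.univ.sup' Finset.univ_nonempty (A.x t)

/-- Minimum load at time `t`. -/
def minLoad {S : LBSetup V} [Nonempty V] (A : LBAlgo S) (t : ℕ) : ℕ :=
  Finset.univ.inf' Finset.univ_nonempty (A.x t)

/-- Discrepancy at time `t`. -/
def disc {S : LBSetup V} [Nonempty V] (A : LBAlgo S) (t : ℕ) : ℕ :=
  maxLoad A t - minLoad A t

/-- Transition matrix `P` of the balancing graph `G⁺`. -/
noncomputable def LBSetup.P (S : LBSetup V) : Matrix V V ℝ :=
  Matrix.of fun u v =>
    if S.Adj u v then (1 : ℝ) / S.dPlus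
    else if u = v then (S.dSelf : ℝ) / S.dPlus else 0

/-- `μ` is the eigenvalue gap of `P`: `μ = 1 - λ₂` where `λ₂` is the
largest eigenvalue of `P` different from `1`. -/
def LBSetup.IsEigGap (S : LBSetup V) (μ : ℝ) : Prop :=
  ∃ lam : ℝ, μ = 1 - lam ∧ lam ∈ spectrum ℝ S.P ∧ lam ≠ 1 ∧
    ∀ x ∈ spectrum ℝ S.P, x ≠ 1 → x ≤ lam

/-- The underlying simple graph of the setup. -/
def LBSetup.toSimpleGraph (S : LBSetup V) : SimpleGraph V where
  Adj u v := S.Adj u v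
  symm := ⟨fun u v h => S.symm u v h⟩
  loopless := ⟨fun u h => S.loopless u h⟩

/-- Rotor-router execution on a graph without self-loops: `ord u` is the cyclic ordering
of the `d` outgoing edges of `u` and `ρ t u` is the rotor position of `u` at step `t`.
At step `t`, node `u` sends its `x_t(u)` tokens one at a time along consecutive outgoing
edges in cyclic order starting from the rotor, then advances the rotor past the last used
edge: the edge at cyclic position `i` receives `⌊x_t(u)/d⌋` tokens plus one extra token
iff `(i − ρ_t(u)) mod d < x_t(u) mod d`. -/
def IsRotorRouter (S : LBSetup V) (A : LBAlgo S)
    (ord : ∀ u : V, Fin S.d ≃ {v : V // S.Adj u v})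
    (ρ : ℕ → V → Fin S.d) : Prop :=
  ∀ t, 1 ≤ t → ∀ u : V,
    (∀ i : Fin S.d,
      A.f t u (ord u i).1 =
        A.x t u / S.d +
          (if ((i : ℕ) + S.d - ((ρ t u : ℕ) % S.d)) % S.d < A.x t u % S.d
            then 1 else 0)) ∧
    ((ρ (t + 1) u : ℕ) = ((ρ t u : ℕ) + A.x t u) % S.d)

namespace RRAux
open SimpleGraph Walk

variable {α : Type} [DecidableEq α] {G : SimpleGraph α}

lemma split_of_not_isPath {u v : α} (p : G.Walk u v) (hnp : ¬ p.IsPath) :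
    ∃ (x : α) (q : G.Walk u x) (r : G.Walk x x) (s : G.Walk x v),
      r.length ≠ 0 ∧ p = q.append (r.append s) := by
  induction p with
  | nil => exact absurd Walk.IsPath.nil hnp
  | @cons a b v h' p ih =>
    by_cases hp : p.IsPath
    · have hu : a ∈ p.support := by
        by_contra hu
        exact hnp (hp.cons hu)
      refine ⟨a, Walk.nil, Walk.cons h' (p.takeUntil a hu), p.dropUntil a hu, by simp, ?_⟩
      rw [Walk.nil_append, Walk.cons_append, Walk.take_spec]
    · obtain ⟨x, q, r, s, hr, hpe⟩ := ih hp
      exact ⟨x, Walk.cons h' q, r, s, hr, by rw [hpe, Walk.cons_append]⟩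

lemma head_edge {a t x : α} (q : G.Walk a t) (hq : q.IsPath) (he : s(a, x) ∈ q.edges) :
    ∃ (h : G.Adj a x) (q' : G.Walk x t), q = Walk.cons h q' := by
  cases q with
  | nil => simp at he
  | @cons _ b _ h' q' =>
    rw [Walk.edges_cons, List.mem_cons] at he
    rcases he with he | he
    · have hbx : b = x := by
        rw [Sym2.congr_right] at he
        exact he.symm
      subst hbx
      exact ⟨h', q', rfl⟩
    · exfalso
      have ha : a ∈ q'.support := Walk.fst_mem_support_of_mem_edges q' he
      rw [Walk.cons_isPath_iff] at hq
      exact hq.2 ha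

lemma isPath_closing_edge {s a : α} (p : G.Walk s a) (hp : p.IsPath)
    (he : s(a, s) ∈ p.edges) : p.length = 1 := by
  have hq : p.reverse.IsPath := hp.reverse
  have he' : s(a, s) ∈ p.reverse.edges := by
    rw [Walk.edges_reverse, List.mem_reverse]; exact he
  obtain ⟨h, q', hq'⟩ := head_edge p.reverse hq he'
  have : q'.IsPath := by
    rw [hq', Walk.cons_isPath_iff] at hq
    exact hq.1
  have hnil : q' = Walk.nil := (Walk.isPath_iff_eq_nil (p := q')).1 this
  have : p.reverse.length = 1 := by rw [hq', hnil]; simp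
  rwa [Walk.length_reverse] at this

lemma exists_odd_cycle (n : ℕ) {a : α} (w : G.Walk a a)
    (hlen : w.length = n) (hodd : n % 2 = 1) :
    ∃ (b : α) (c : G.Walk b b), c.IsCycle ∧ c.length % 2 = 1 ∧ c.length ≤ n := by
  induction n using Nat.strong_induction_on generalizing a with
  | _ n IH =>
  cases w with
  | nil => simp at hlen; omega
  | @cons _ b _ hab p =>
    rw [Walk.length_cons] at hlen
    by_cases hp : p.IsPath
    · by_cases he : s(a, b) ∈ p.edges
      · have h1 : p.length = 1 := isPath_closing_edge p hp he
        omega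
      · have hcyc : (Walk.cons hab p).IsCycle := (Walk.cons_isCycle_iff p hab).2 ⟨hp, he⟩
        exact ⟨a, Walk.cons hab p, hcyc, by rw [Walk.length_cons]; omega,
          by rw [Walk.length_cons]; omega⟩
    · obtain ⟨x, q, r, s, hr, hpe⟩ := split_of_not_isPath p hp
      have hlen2 : q.length + (r.length + s.length) = p.length := by
        rw [hpe, Walk.length_append, Walk.length_append]
      by_cases hro : r.length % 2 = 1
      · obtain ⟨c₁, c, hc, hcodd, hcle⟩ := IH r.length (by omega) r rfl hro
        exact ⟨c₁, c, hc, hcodd, by omega⟩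
      · have hm : (Walk.cons hab (q.append s)).length = q.length + s.length + 1 := by
          rw [Walk.length_cons, Walk.length_append]
        obtain ⟨c₁, c, hc, hcodd, hcle⟩ :=
          IH (q.length + s.length + 1) (by omega) (Walk.cons hab (q.append s)) hm (by omega)
        exact ⟨c₁, c, hc, hcodd, by omega⟩

end RRAux

namespace RR

variable (S : LBSetup V) (c₀ : V) (k : ℕ)

noncomputable def lev (v : V) : ℕ := S.toSimpleGraph.dist c₀ v

noncomputable def yy (v : V) : ℕ :=
  if lev S c₀ v % 2 = 0 then k + (k - lev S c₀ v) else k - (k - lev S c₀ v)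

noncomputable def mk' (a c : V) : ℕ :=
  if lev S c₀ a < lev S c₀ c ∧ lev S c₀ c ≤ k then
    (if lev S c₀ c % 2 = 0 then 1 else 0)
  else if lev S c₀ c < lev S c₀ a ∧ lev S c₀ a ≤ k then
    (if lev S c₀ a % 2 = 0 then 1 else 0)
  else
    (if (Fintype.equivFin V a : ℕ) < (Fintype.equivFin V c : ℕ) then 1 else 0)

noncomputable def bb (u : V) : ℕ := ∑ v ∈ S.nbrs u, mk' S c₀ k u v

noncomputable def XX (u : V) : ℕ := S.d * yy S c₀ k u + bb S c₀ k u

def CC : ℕ := S.d * (2 * k + 1)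

lemma mem_nbrs {u v : V} : v ∈ S.nbrs u ↔ S.Adj u v := by
  simp [LBSetup.nbrs]

lemma card_nbrs (u : V) : (S.nbrs u).card = S.d := S.regular u

lemma mk'_le_one (a c : V) : mk' S c₀ k a c ≤ 1 := by
  unfold mk'; split_ifs <;> omega

lemma bb_le (u : V) : bb S c₀ k u ≤ S.d := by
  calc bb S c₀ k u ≤ ∑ _v ∈ S.nbrs u, 1 :=
        Finset.sum_le_sum (fun v _ => mk'_le_one S c₀ k u v)
    _ = S.d := by rw [Finset.sum_const, card_nbrs, smul_eq_mul, mul_one]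

lemma yy_le (v : V) : yy S c₀ k v ≤ 2 * k := by
  unfold yy; split_ifs <;> omega

lemma lev_adj (hconn : S.toSimpleGraph.Connected) {u v : V} (h : S.Adj u v) : lev S c₀ v ≤ lev S c₀ u + 1 := by
  obtain ⟨p, hp⟩ := hconn.exists_walk_length_eq_dist c₀ u
  have hadj : S.toSimpleGraph.Adj u v := h
  have := SimpleGraph.dist_le (p.append (SimpleGraph.Walk.cons hadj SimpleGraph.Walk.nil))
  simp only [SimpleGraph.Walk.length_append, SimpleGraph.Walk.length_cons,
    SimpleGraph.Walk.length_nil, hp] at this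
  unfold lev
  omega

lemma lev_self : lev S c₀ c₀ = 0 := by
  unfold lev; exact SimpleGraph.dist_self

lemma lev_one (hconn : S.toSimpleGraph.Connected) {v : V} (h : S.Adj c₀ v) : lev S c₀ v = 1 := by
  have h1 : lev S c₀ v ≤ 1 := by
    have := lev_adj S c₀ hconn h
    rw [lev_self] at this
    omega
  have h0 : lev S c₀ v ≠ 0 := by
    intro h0
    have hne : c₀ ≠ v := by
      intro he; exact S.loopless c₀ (he ▸ h)
    exact hne ((hconn.dist_eq_zero_iff).1 h0)
  omega

end RR

namespace RR
variable (S : LBSetup V) (c₀ : V) (k : ℕ)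

lemma horiz (hconn : S.toSimpleGraph.Connected)
    (hgirth : ∀ (u : V) (w : S.toSimpleGraph.Walk u u),
      w.IsCycle → Odd w.length → 2 * k + 1 ≤ w.length)
    {u v : V} (h : S.Adj u v) (he : lev S c₀ u = lev S c₀ v) : k ≤ lev S c₀ u := by
  by_contra hlt
  push_neg at hlt
  obtain ⟨p, hp⟩ := hconn.exists_walk_length_eq_dist c₀ u
  obtain ⟨q, hq⟩ := hconn.exists_walk_length_eq_dist c₀ v
  have hadj : S.toSimpleGraph.Adj u v := h
  set w := p.append (SimpleGraph.Walk.cons hadj q.reverse) with hw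
  have hwlen : w.length = 2 * lev S c₀ u + 1 := by
    rw [hw, SimpleGraph.Walk.length_append, SimpleGraph.Walk.length_cons,
      SimpleGraph.Walk.length_reverse, hp, hq]
    simp only [lev] at he ⊢
    omega
  obtain ⟨b, c, hc, hcodd, hcle⟩ := RRAux.exists_odd_cycle w.length w rfl (by omega)
  have := hgirth b c hc (Nat.odd_iff.2 hcodd)
  omega

lemma keyEdge (hconn : S.toSimpleGraph.Connected)
    (hhor : ∀ u v : V, S.Adj u v → lev S c₀ u = lev S c₀ v → k ≤ lev S c₀ u)
    {u v : V} (h : S.Adj u v) :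
    yy S c₀ k u + yy S c₀ k v + (mk' S c₀ k u v + mk' S c₀ k v u) = 2 * k + 1 := by
  have hvu : S.Adj v u := S.symm u v h
  have hne : u ≠ v := fun he => S.loopless u (by rw [he] at h ⊢; exact h)
  have hπ : (Fintype.equivFin V u : ℕ) ≠ (Fintype.equivFin V v : ℕ) := by
    intro heq
    exact hne ((Fintype.equivFin V).injective (Fin.val_injective heq))
  have h1 : lev S c₀ v ≤ lev S c₀ u + 1 := lev_adj S c₀ hconn h
  have h2 : lev S c₀ u ≤ lev S c₀ v + 1 := lev_adj S c₀ hconn hvu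
  have h3 : lev S c₀ u = lev S c₀ v → k ≤ lev S c₀ u := hhor u v h
  unfold yy mk'
  split_ifs <;> omega

lemma sumOut (u : V) :
    ∑ v ∈ S.nbrs u, (yy S c₀ k u + mk' S c₀ k u v) = XX S c₀ k u := by
  rw [Finset.sum_add_distrib, Finset.sum_const, card_nbrs, smul_eq_mul]
  rfl

lemma keySum (hkey : ∀ u v : V, S.Adj u v →
      yy S c₀ k u + yy S c₀ k v + (mk' S c₀ k u v + mk' S c₀ k v u) = 2 * k + 1)
    (u : V) :
    (∑ v ∈ S.nbrs u, (yy S c₀ k v + mk' S c₀ k v u)) + XX S c₀ k u = CC S k := by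
  have h1 : ∑ v ∈ S.nbrs u,
      (yy S c₀ k u + mk' S c₀ k u v + (yy S c₀ k v + mk' S c₀ k v u)) =
      ∑ _v ∈ S.nbrs u, (2 * k + 1) := by
    apply Finset.sum_congr rfl
    intro v hv
    have := hkey u v ((mem_nbrs S).1 hv)
    omega
  rw [Finset.sum_add_distrib, sumOut, Finset.sum_const, card_nbrs, smul_eq_mul] at h1
  unfold CC
  omega

lemma XX_le (u : V) : XX S c₀ k u ≤ CC S k := by
  have h1 : yy S c₀ k u ≤ 2 * k := yy_le S c₀ k u
  have h2 : bb S c₀ k u ≤ S.d := bb_le S c₀ k u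
  have h3 : S.d * yy S c₀ k u ≤ S.d * (2 * k) := Nat.mul_le_mul_left _ h1
  have h4 : S.d * (2 * k) + S.d = S.d * (2 * k + 1) := by ring
  unfold XX CC
  omega

end RR

namespace RR
variable (S : LBSetup V) (c₀ : V) (k : ℕ)

lemma cardO (u : V) :
    Fintype.card {x : {v : V // S.Adj u v} // mk' S c₀ k u x.1 = 1} = bb S c₀ k u := by
  refine Eq.trans (Fintype.card_congr (Equiv.subtypeSubtypeEquivSubtypeInter
    (fun v => S.Adj u v) (fun v => mk' S c₀ k u v = 1))) ?_
  rw [Fintype.card_subtype]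
  have h2 : (univ.filter fun v => S.Adj u v ∧ mk' S c₀ k u v = 1) =
      (S.nbrs u).filter (fun v => mk' S c₀ k u v = 1) := by
    rw [LBSetup.nbrs, Finset.filter_filter]
  rw [h2, Finset.card_filter]
  unfold bb
  apply Finset.sum_congr rfl
  intro v _
  have := mk'_le_one S c₀ k u v
  split_ifs with h <;> omega

lemma card_adj (u : V) : Fintype.card {v : V // S.Adj u v} = S.d := by
  rw [Fintype.card_subtype]
  exact S.regular u

lemma cardP (u : V) :
    Fintype.card {x : {v : V // S.Adj u v} // ¬ mk' S c₀ k u x.1 = 1} =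
      S.d - bb S c₀ k u := by
  rw [Fintype.card_subtype_compl, cardO, card_adj]

noncomputable def eO (u : V) :
    Fin (bb S c₀ k u) ≃ {x : {v : V // S.Adj u v} // mk' S c₀ k u x.1 = 1} :=
  (Fintype.equivFinOfCardEq (cardO S c₀ k u)).symm

noncomputable def eP (u : V) :
    Fin (S.d - bb S c₀ k u) ≃ {x : {v : V // S.Adj u v} // ¬ mk' S c₀ k u x.1 = 1} :=
  (Fintype.equivFinOfCardEq (cardP S c₀ k u)).symm

lemma ordF_aux (u : V) (i : Fin S.d) (h : ¬ (i : ℕ) < bb S c₀ k u) :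
    (i : ℕ) - bb S c₀ k u < S.d - bb S c₀ k u := by
  have := i.2; omega

noncomputable def ordF (u : V) (i : Fin S.d) : {v : V // S.Adj u v} :=
  if h : (i : ℕ) < bb S c₀ k u then (eO S c₀ k u ⟨i, h⟩).1
  else (eP S c₀ k u ⟨(i : ℕ) - bb S c₀ k u, ordF_aux S c₀ k u i h⟩).1

lemma ordF_bij (u : V) : Function.Bijective (ordF S c₀ k u) := by
  constructor
  · intro i j hij
    unfold ordF at hij
    split_ifs at hij with h1 h2 h2
    · have h3 := (eO S c₀ k u).injective (Subtype.ext hij)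
      have h4 := congrArg Fin.val h3
      simp only at h4
      exact Fin.ext h4
    · have hA := (eO S c₀ k u ⟨i, h1⟩).2
      rw [hij] at hA
      exact absurd hA (eP S c₀ k u _).2
    · have hA := (eO S c₀ k u ⟨j, h2⟩).2
      rw [← hij] at hA
      exact absurd hA (eP S c₀ k u _).2
    · have h3 := (eP S c₀ k u).injective (Subtype.ext hij)
      have h4 := congrArg Fin.val h3
      simp only at h4
      have := i.2
      have := j.2
      exact Fin.ext (by omega)
  · intro x
    by_cases hx : mk' S c₀ k u x.1 = 1
    · set z := (eO S c₀ k u).symm ⟨x, hx⟩ with hz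
      have hzlt : (z : ℕ) < S.d := by
        have := z.2
        have := bb_le S c₀ k u
        omega
      refine ⟨⟨(z : ℕ), hzlt⟩, ?_⟩
      unfold ordF
      rw [dif_pos (show ((⟨(z : ℕ), hzlt⟩ : Fin S.d) : ℕ) < bb S c₀ k u from z.2)]
      have harg : (⟨((⟨(z : ℕ), hzlt⟩ : Fin S.d) : ℕ), z.2⟩ : Fin (bb S c₀ k u)) = z := by
        apply Fin.ext
        rfl
      rw [harg, hz, Equiv.apply_symm_apply]
    · set z := (eP S c₀ k u).symm ⟨x, hx⟩ with hz
      have hzlt : bb S c₀ k u + (z : ℕ) < S.d := by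
        have := z.2
        omega
      have hnlt : ¬ ((⟨bb S c₀ k u + (z : ℕ), hzlt⟩ : Fin S.d) : ℕ) < bb S c₀ k u := by
        show ¬ bb S c₀ k u + (z : ℕ) < bb S c₀ k u
        omega
      refine ⟨⟨bb S c₀ k u + (z : ℕ), hzlt⟩, ?_⟩
      unfold ordF
      rw [dif_neg hnlt]
      have harg : (⟨((⟨bb S c₀ k u + (z : ℕ), hzlt⟩ : Fin S.d) : ℕ) - bb S c₀ k u,
          ordF_aux S c₀ k u _ hnlt⟩ : Fin (S.d - bb S c₀ k u)) = z := by
        apply Fin.ext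
        show bb S c₀ k u + (z : ℕ) - bb S c₀ k u = (z : ℕ)
        omega
      rw [harg, hz, Equiv.apply_symm_apply]

noncomputable def ordE (u : V) : Fin S.d ≃ {v : V // S.Adj u v} :=
  Equiv.ofBijective _ (ordF_bij S c₀ k u)

lemma ordP (u : V) (i : Fin S.d) :
    mk' S c₀ k u ((ordE S c₀ k u i) : {v : V // S.Adj u v}).1 =
      if (i : ℕ) < bb S c₀ k u then 1 else 0 := by
  show mk' S c₀ k u ((ordF S c₀ k u i)).1 = _
  unfold ordF
  split_ifs with h
  · exact (eO S c₀ k u ⟨i, h⟩).2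
  · have hA : ¬ mk' S c₀ k u
        ((eP S c₀ k u ⟨(i : ℕ) - bb S c₀ k u, ordF_aux S c₀ k u i h⟩).1).1 = 1 :=
      (eP S c₀ k u _).2
    have hB := mk'_le_one S c₀ k u
      ((eP S c₀ k u ⟨(i : ℕ) - bb S c₀ k u, ordF_aux S c₀ k u i h⟩).1).1
    omega

lemma indHelp (d b i : ℕ) (hd : 0 < d) (hb : b < d) (hi : i < d) :
    ((i + d - b) % d < d - b) ↔ b ≤ i := by
  rcases le_or_gt b i with hle | hlt
  · have h1 : i + d - b = (i - b) + d := by omega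
    rw [h1, Nat.add_mod_right, Nat.mod_eq_of_lt (by omega)]
    omega
  · rw [Nat.mod_eq_of_lt (by omega)]
    omega

end RR

namespace RR
variable (S : LBSetup V) (c₀ : V) (k : ℕ)

noncomputable def ff (t : ℕ) (u v : V) : ℕ :=
  if t % 2 = 1 then yy S c₀ k u + mk' S c₀ k u v
  else (2 * k + 1) - (yy S c₀ k u + mk' S c₀ k u v)

noncomputable def xxt (t : ℕ) (u : V) : ℕ :=
  if t % 2 = 1 then XX S c₀ k u else CC S k - XX S c₀ k u

noncomputable def rho (hd : 0 < S.d) (t : ℕ) (u : V) : Fin S.d :=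
  if t % 2 = 1 then ⟨0, hd⟩ else ⟨bb S c₀ k u % S.d, Nat.mod_lt _ hd⟩

lemma flowOut (t : ℕ) (u : V) :
    xxt S c₀ k t u = ∑ v ∈ S.nbrs u, ff S c₀ k t u v := by
  by_cases hp : t % 2 = 1
  · simp only [xxt, ff, if_pos hp]
    exact (sumOut S c₀ k u).symm
  · simp only [xxt, ff, if_neg hp]
    have hsum : (∑ v ∈ S.nbrs u, ((2 * k + 1) - (yy S c₀ k u + mk' S c₀ k u v)))
        + ∑ v ∈ S.nbrs u, (yy S c₀ k u + mk' S c₀ k u v)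
        = ∑ _v ∈ S.nbrs u, (2 * k + 1) := by
      rw [← Finset.sum_add_distrib]
      apply Finset.sum_congr rfl
      intro v _
      have h1 := yy_le S c₀ k u
      have h2 := mk'_le_one S c₀ k u v
      omega
    rw [sumOut, Finset.sum_const, card_nbrs, smul_eq_mul] at hsum
    have h3 := XX_le S c₀ k u
    unfold CC at *
    omega

lemma flowIn (hkey : ∀ u v : V, S.Adj u v →
      yy S c₀ k u + yy S c₀ k v + (mk' S c₀ k u v + mk' S c₀ k v u) = 2 * k + 1)
    (t : ℕ) (u : V) :
    xxt S c₀ k (t + 1) u = ∑ v ∈ S.nbrs u, ff S c₀ k t v u := by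
  have hks := keySum S c₀ k hkey u
  by_cases hp : t % 2 = 1
  · have hp1 : ¬ (t + 1) % 2 = 1 := by omega
    simp only [xxt, ff, if_pos hp, if_neg hp1]
    omega
  · have hp1 : (t + 1) % 2 = 1 := by omega
    simp only [xxt, ff, if_neg hp, if_pos hp1]
    have hsum : (∑ v ∈ S.nbrs u, ((2 * k + 1) - (yy S c₀ k v + mk' S c₀ k v u)))
        + ∑ v ∈ S.nbrs u, (yy S c₀ k v + mk' S c₀ k v u)
        = ∑ _v ∈ S.nbrs u, (2 * k + 1) := by
      rw [← Finset.sum_add_distrib]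
      apply Finset.sum_congr rfl
      intro v hv
      have h1 := yy_le S c₀ k v
      have h2 := mk'_le_one S c₀ k v u
      omega
    rw [Finset.sum_const, card_nbrs, smul_eq_mul] at hsum
    have h3 := XX_le S c₀ k u
    unfold CC at *
    omega

lemma rrMain (hd : 0 < S.d) (t : ℕ) (u : V) (i : Fin S.d) :
    ff S c₀ k t u ((ordE S c₀ k u i) : {v : V // S.Adj u v}).1 =
      xxt S c₀ k t u / S.d +
        (if ((i : ℕ) + S.d - ((rho S c₀ k hd t u : ℕ) % S.d)) % S.d
            < xxt S c₀ k t u % S.d then 1 else 0) := by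
  have hb := bb_le S c₀ k u
  have hy := yy_le S c₀ k u
  have hmk := ordP S c₀ k u i
  have hi := i.2
  by_cases hp : t % 2 = 1
  · simp only [ff, xxt, rho, if_pos hp]
    rw [hmk]
    have hrv : ((⟨0, hd⟩ : Fin S.d) : ℕ) % S.d = 0 := by simp
    rw [hrv]
    have hidx : ((i : ℕ) + S.d - 0) % S.d = (i : ℕ) := by
      rw [Nat.sub_zero, Nat.add_mod_right, Nat.mod_eq_of_lt hi]
    rw [hidx]
    by_cases hbd : bb S c₀ k u = S.d
    · have hXX : XX S c₀ k u = S.d * (yy S c₀ k u + 1) := by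
        show S.d * yy S c₀ k u + bb S c₀ k u = _
        rw [hbd]; ring
      rw [hXX, Nat.mul_mod_right, Nat.mul_div_cancel_left _ hd]
      rw [if_pos (show (i : ℕ) < bb S c₀ k u by omega),
        if_neg (show ¬ (i : ℕ) < 0 by omega)]
    · have hm : XX S c₀ k u % S.d = bb S c₀ k u := by
        show (S.d * yy S c₀ k u + bb S c₀ k u) % S.d = _
        rw [Nat.mul_add_mod, Nat.mod_eq_of_lt (by omega)]
      have hdv : XX S c₀ k u / S.d = yy S c₀ k u := by
        show (S.d * yy S c₀ k u + bb S c₀ k u) / S.d = _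
        rw [Nat.mul_add_div hd, Nat.div_eq_of_lt (by omega)]
        all_goals omega
      rw [hm, hdv]
      all_goals (split_ifs <;> omega)
  · simp only [ff, xxt, rho, if_neg hp]
    rw [hmk]
    have hrv : ((⟨bb S c₀ k u % S.d, Nat.mod_lt _ hd⟩ : Fin S.d) : ℕ) % S.d
        = bb S c₀ k u % S.d := Nat.mod_eq_of_lt (Nat.mod_lt _ hd)
    rw [hrv]
    set b := bb S c₀ k u with hbdef
    set y := yy S c₀ k u with hydef
    set z := 2 * k - y with hzdef
    have hCC : CC S k = S.d * z + S.d * y + S.d := by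
      show S.d * (2 * k + 1) = _
      have h5 : 2 * k + 1 = z + y + 1 := by omega
      rw [h5]; ring
    have hXXd : XX S c₀ k u = S.d * y + b := rfl
    have hball : CC S k - XX S c₀ k u = S.d * z + (S.d - b) := by omega
    rw [hball]
    by_cases hb0 : b = 0
    · have h1 : S.d * z + (S.d - b) = S.d * (z + 1) := by rw [hb0]; ring_nf; omega
      rw [h1, Nat.mul_mod_right, Nat.mul_div_cancel_left _ hd]
      rw [if_neg (show ¬ (i : ℕ) < b by omega), if_neg (show ¬ _ < 0 by omega)]
      omega
    · by_cases hbd : b = S.d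
      · have h1 : S.d * z + (S.d - b) = S.d * z := by rw [hbd]; omega
        rw [h1, Nat.mul_mod_right, Nat.mul_div_cancel_left _ hd]
        rw [if_pos (show (i : ℕ) < b by omega), if_neg (show ¬ _ < 0 by omega)]
        omega
      · have hblt : b < S.d := by omega
        have hm : (S.d * z + (S.d - b)) % S.d = S.d - b := by
          rw [Nat.mul_add_mod, Nat.mod_eq_of_lt (by omega)]
        have hdv : (S.d * z + (S.d - b)) / S.d = z := by
          rw [Nat.mul_add_div hd, Nat.div_eq_of_lt (by omega)]
          all_goals omega
        rw [hm, hdv, Nat.mod_eq_of_lt hblt]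
        have hcond := indHelp S.d b (i : ℕ) hd hblt hi
        rcases le_or_gt b (i : ℕ) with hle | hlt
        · rw [if_neg (show ¬ (i : ℕ) < b by omega), if_pos (hcond.2 hle)]
          omega
        · rw [if_pos (show (i : ℕ) < b by omega), if_neg (by
            intro hcc
            exact absurd (hcond.1 hcc) (by omega))]
          omega

lemma rrRotor (hd : 0 < S.d) (t : ℕ) (u : V) :
    ((rho S c₀ k hd (t + 1) u : ℕ)) =
      ((rho S c₀ k hd t u : ℕ) + xxt S c₀ k t u) % S.d := by
  have hb := bb_le S c₀ k u
  have hy := yy_le S c₀ k u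
  by_cases hp : t % 2 = 1
  · have hp1 : ¬ (t + 1) % 2 = 1 := by omega
    simp only [rho, xxt, if_pos hp, if_neg hp1]
    show bb S c₀ k u % S.d = (0 + XX S c₀ k u) % S.d
    rw [Nat.zero_add]
    show _ = (S.d * yy S c₀ k u + bb S c₀ k u) % S.d
    rw [Nat.mul_add_mod]
  · have hp1 : (t + 1) % 2 = 1 := by omega
    simp only [rho, xxt, if_neg hp, if_pos hp1]
    show (0 : ℕ) = ((bb S c₀ k u % S.d) + (CC S k - XX S c₀ k u)) % S.d
    rw [Nat.mod_add_mod]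
    have hXXd : XX S c₀ k u = S.d * yy S c₀ k u + bb S c₀ k u := rfl
    have hXl : XX S c₀ k u ≤ CC S k := XX_le S c₀ k u
    have hval : bb S c₀ k u + (CC S k - XX S c₀ k u)
        = CC S k - S.d * yy S c₀ k u := by omega
    rw [hval]
    have h2 : CC S k - S.d * yy S c₀ k u = S.d * (2 * k + 1 - yy S c₀ k u) := by
      have h3 : S.d * (2 * k + 1) = S.d * (2 * k + 1 - yy S c₀ k u)
          + S.d * yy S c₀ k u := by
        rw [← Nat.mul_add]
        congr 1
        omega
      show S.d * (2 * k + 1) - _ = _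
      omega
    rw [h2, Nat.mul_mod_right]

lemma xxc0 (hconn : S.toSimpleGraph.Connected) (hk : 1 ≤ k) :
    XX S c₀ k c₀ = S.d * (2 * k) := by
  have hy : yy S c₀ k c₀ = 2 * k := by
    unfold yy
    rw [lev_self]
    norm_num
    omega
  have hbz : bb S c₀ k c₀ = 0 := by
    apply Finset.sum_eq_zero
    intro v hv
    have hadj : S.Adj c₀ v := (mem_nbrs S).1 hv
    have hl1 : lev S c₀ v = 1 := lev_one S c₀ hconn hadj
    unfold mk'
    rw [lev_self, hl1]
    rw [if_pos ⟨by omega, by omega⟩]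
    norm_num
  show S.d * yy S c₀ k c₀ + bb S c₀ k c₀ = _
  rw [hy, hbz]
  omega

lemma xxc1 (hconn : S.toSimpleGraph.Connected) {c₁ : V} (h : S.Adj c₀ c₁)
    (hk : 1 ≤ k) : XX S c₀ k c₁ ≤ 2 * S.d := by
  have hy : yy S c₀ k c₁ = 1 := by
    unfold yy
    rw [lev_one S c₀ hconn h]
    have : ¬ (1 % 2 = 0) := by omega
    rw [if_neg this]
    omega
  have hble := bb_le S c₀ k c₁
  show S.d * yy S c₀ k c₁ + bb S c₀ k c₁ ≤ _
  rw [hy]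
  omega

lemma arith1 (d k mx mn : ℕ) (hk : 2 ≤ k) (h1 : d * (2 * k) ≤ mx)
    (h2 : mn ≤ 2 * d) : d * (k - 1) ≤ mx - mn := by
  obtain ⟨k', rfl⟩ := Nat.exists_eq_add_of_le hk
  have e1 : d * (2 * (2 + k')) = 2 * (d * k') + 4 * d := by ring
  have e2 : d * ((2 + k') - 1) = d * k' + d := by
    have h3 : (2 + k') - 1 = k' + 1 := by omega
    rw [h3]; ring
  omega

lemma arith2 (d k mx mn : ℕ) (hk : 2 ≤ k) (h1 : d * (2 * k + 1) - 2 * d ≤ mx)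
    (h2 : mn ≤ d) : d * (k - 1) ≤ mx - mn := by
  obtain ⟨k', rfl⟩ := Nat.exists_eq_add_of_le hk
  have e1 : d * (2 * (2 + k') + 1) = 2 * (d * k') + 5 * d := by ring
  have e2 : d * ((2 + k') - 1) = d * k' + d := by
    have h3 : (2 + k') - 1 = k' + 1 := by omega
    rw [h3]; ring
  omega

end RR


/-- **Theorem 5 (lower bound for the rotor-router without self-loops).** Let `G` be a
connected `d`-regular non-bipartite graph (no self-loops added) with odd girth
`2·φ(G) + 1`, where `φ(G) ≥ 2`. Then there are an initial load distribution, cyclic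
orderings of the outgoing edges, and initial rotor positions such that the resulting
rotor-router execution has discrepancy at least `d·(φ(G) − 1)` at every time step. -/
theorem rotorRouter_lower_bound (V : Type) [Fintype V] [DecidableEq V] [Nonempty V]
    (S : LBSetup V) (hself : S.dSelf = 0)
    (φ : ℕ) (hφ : 2 ≤ φ)
    (hodd : ∃ (u : V) (w : S.toSimpleGraph.Walk u u),
      w.IsCycle ∧ w.length = 2 * φ + 1)
    (hgirth : ∀ (u : V) (w : S.toSimpleGraph.Walk u u),
      w.IsCycle → Odd w.length → 2 * φ + 1 ≤ w.length) :
    ∃ (A : LBAlgo S) (ord : ∀ u : V, Fin S.d ≃ {v : V // S.Adj u v})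
      (ρ : ℕ → V → Fin S.d),
      IsRotorRouter S A ord ρ ∧
      ∀ t, 1 ≤ t → S.d * (φ - 1) ≤ disc A t := by
  
  classical
  obtain ⟨c₀, w, hcyc, hwlen⟩ := hodd
  have hc1 : ∃ c₁ : V, S.Adj c₀ c₁ := by
    cases w with
    | nil => rw [SimpleGraph.Walk.length_nil] at hwlen; omega
    | cons hab p => exact ⟨_, hab⟩
  obtain ⟨c₁, hc01⟩ := hc1
  have hd : 0 < S.d := by
    have h1 := S.regular c₀
    have h2 : c₁ ∈ Finset.univ.filter (fun v => S.Adj c₀ v) := by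
      simp [hc01]
    have h3 := Finset.card_pos.2 ⟨c₁, h2⟩
    omega
  have hconn : S.toSimpleGraph.Connected := by
    rw [SimpleGraph.connected_iff]
    exact ⟨fun a b => (SimpleGraph.reachable_iff_reflTransGen a b).2 (S.connected a b),
      ⟨c₀⟩⟩
  have hhor : ∀ u v : V, S.Adj u v → RR.lev S c₀ u = RR.lev S c₀ v → φ ≤ RR.lev S c₀ u :=
    fun u v h he => RR.horiz S c₀ φ hconn hgirth h he
  have hkey : ∀ u v : V, S.Adj u v → RR.yy S c₀ φ u + RR.yy S c₀ φ v +
      (RR.mk' S c₀ φ u v + RR.mk' S c₀ φ v u) = 2 * φ + 1 :=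
    fun u v h => RR.keyEdge S c₀ φ hconn hhor h
  refine ⟨⟨RR.ff S c₀ φ, fun _ _ _ => 0, RR.xxt S c₀ φ, ?_, ?_⟩,
      RR.ordE S c₀ φ, RR.rho S c₀ φ hd, ?_, ?_⟩
  · intro t ht u
    simp only [Finset.sum_const_zero, add_zero]
    exact RR.flowOut S c₀ φ t u
  · intro t ht u
    simp only [Finset.sum_const_zero, add_zero]
    exact RR.flowIn S c₀ φ hkey t u
  · intro t ht u
    exact ⟨fun i => RR.rrMain S c₀ φ hd t u i, RR.rrRotor S c₀ φ hd t u⟩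
  · intro t ht
    show S.d * (φ - 1) ≤
      Finset.univ.sup' Finset.univ_nonempty (RR.xxt S c₀ φ t) -
        Finset.univ.inf' Finset.univ_nonempty (RR.xxt S c₀ φ t)
    have hle1 : RR.xxt S c₀ φ t c₀ ≤
        Finset.univ.sup' Finset.univ_nonempty (RR.xxt S c₀ φ t) :=
      Finset.le_sup' _ (Finset.mem_univ c₀)
    have hle1' : RR.xxt S c₀ φ t c₁ ≤
        Finset.univ.sup' Finset.univ_nonempty (RR.xxt S c₀ φ t) :=
      Finset.le_sup' _ (Finset.mem_univ c₁)
    have hle2 : Finset.univ.inf' Finset.univ_nonempty (RR.xxt S c₀ φ t) ≤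
        RR.xxt S c₀ φ t c₁ :=
      Finset.inf'_le _ (Finset.mem_univ c₁)
    have hle2' : Finset.univ.inf' Finset.univ_nonempty (RR.xxt S c₀ φ t) ≤
        RR.xxt S c₀ φ t c₀ :=
      Finset.inf'_le _ (Finset.mem_univ c₀)
    by_cases hp : t % 2 = 1
    · have hx0 : RR.xxt S c₀ φ t c₀ = S.d * (2 * φ) := by
        unfold RR.xxt
        rw [if_pos hp, RR.xxc0 S c₀ φ hconn (by omega)]
      have hx1 : RR.xxt S c₀ φ t c₁ ≤ 2 * S.d := by
        unfold RR.xxt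
        rw [if_pos hp]
        exact RR.xxc1 S c₀ φ hconn hc01 (by omega)
      exact RR.arith1 S.d φ _ _ hφ (hx0 ▸ hle1) (le_trans hle2 hx1)
    · have hCCe : RR.CC S φ = S.d * (2 * φ + 1) := rfl
      have hxc0 : RR.xxt S c₀ φ t c₀ = S.d := by
        unfold RR.xxt
        rw [if_neg hp, RR.xxc0 S c₀ φ hconn (by omega), hCCe]
        have h4 : S.d * (2 * φ + 1) = S.d * (2 * φ) + S.d := by ring
        omega
      have hxc1 : S.d * (2 * φ + 1) - 2 * S.d ≤ RR.xxt S c₀ φ t c₁ := by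
        unfold RR.xxt
        rw [if_neg hp, hCCe]
        have h1 := RR.xxc1 S c₀ φ hconn hc01 (by omega : 1 ≤ φ)
        have h2 := RR.XX_le S c₀ φ c₁
        rw [hCCe] at h2
        omega
      exact RR.arith2 S.d φ _ _ hφ (le_trans hxc1 hle1')
        (le_trans hle2' (le_of_eq hxc0))
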